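/- Let A be a finite dimensional G-graded division algebra over k such that char k does not divide |G|. Then the center Cen(A) of A is a symmetric k-algebra. -/

import Mathlib

open Module

/-- A left ideal of a `G`-graded algebra is graded if it is generated by its
homogeneous elements. -/
def IsGradedLeftIdeal {k A G : Type*} [Field k] [Ring A] [Algebra k A]
    (𝒜 : G → Submodule k A) (I : Submodule A A) : Prop :=
  I = Submodule.span A ((I : Set A) ∩ ⋃ g, (𝒜 g : Set A))

/-- A `G`-graded algebra is graded symmetric if it admits a symmetric linear functional
vanishing on all homogeneous components of degree ≠ e, whose kernel contains no
nonzero graded left ideal. -/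
def IsGradedSymmetric {k A G : Type*} [Field k] [Ring A] [Algebra k A] [Group G]
    (𝒜 : G → Submodule k A) : Prop :=
  ∃ lam : A →ₗ[k] k,
    (∀ a b : A, lam (a * b) = lam (b * a)) ∧
    (∀ g : G, g ≠ 1 → ∀ a ∈ 𝒜 g, lam a = 0) ∧
    ∀ I : Submodule A A, IsGradedLeftIdeal 𝒜 I → (∀ x ∈ I, lam x = 0) → I = ⊥

/-- A `G`-graded division algebra: a `G`-grading of `A` in which every nonzero
homogeneous element is invertible. -/
structure IsGradedDivisionAlgebra {k A G : Type*} [Field k] [Ring A] [Algebra k A]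
    [Group G] [DecidableEq G] (𝒜 : G → Submodule k A) : Prop where
  mul_mem : ∀ {g h : G} {a b : A}, a ∈ 𝒜 g → b ∈ 𝒜 h → a * b ∈ 𝒜 (g * h)
  one_mem : (1 : A) ∈ 𝒜 1
  internal : DirectSum.IsInternal 𝒜
  isUnit_of_ne_zero : ∀ g : G, ∀ a ∈ 𝒜 g, a ≠ 0 → IsUnit a

section Aux

set_option linter.unusedSectionVars false
variable {k A G : Type*} [Field k] [Ring A] [Algebra k A] [Group G] [DecidableEq G]
variable (𝒜 : G → Submodule k A) [DirectSum.Decomposition 𝒜]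

/-- The projection onto the `g`-component, as a linear endomorphism of `A`. -/
noncomputable def gproj (g : G) : A →ₗ[k] A :=
  (𝒜 g).subtype ∘ₗ (DFinsupp.lapply g) ∘ₗ (DirectSum.decomposeLinearEquiv 𝒜).toLinearMap

lemma gproj_apply (g : G) (a : A) :
    gproj 𝒜 g a = (DirectSum.decompose 𝒜 a g : A) := rfl

lemma gproj_mem (g : G) (a : A) : gproj 𝒜 g a ∈ 𝒜 g := (DirectSum.decompose 𝒜 a g).2

lemma gproj_of_mem_same {g : G} {a : A} (h : a ∈ 𝒜 g) : gproj 𝒜 g a = a :=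
  DirectSum.decompose_of_mem_same 𝒜 h

lemma gproj_of_mem_ne {g i : G} {a : A} (h : a ∈ 𝒜 i) (hne : i ≠ g) : gproj 𝒜 g a = 0 := by
  rw [gproj_apply, DirectSum.decompose_of_mem_ne 𝒜 h hne]

variable [Fintype G]

lemma sum_gproj (a : A) : ∑ g : G, gproj 𝒜 g a = a := by
  classical
  conv_rhs => rw [← DirectSum.sum_support_decompose 𝒜 a]
  refine (Finset.sum_subset (Finset.subset_univ _) ?_).symm
  intro g _ hg
  rw [gproj_apply, DFinsupp.notMem_support_iff.mp hg]; rfl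

variable (hmul : ∀ {g h : G} {a b : A}, a ∈ 𝒜 g → b ∈ 𝒜 h → a * b ∈ 𝒜 (g * h))

include hmul

lemma exists_ginv (hone : (1 : A) ∈ 𝒜 1) {g : G} {a : A} (ha : a ∈ 𝒜 g) (hu : IsUnit a) :
    ∃ b, b ∈ 𝒜 g⁻¹ ∧ a * b = 1 ∧ b * a = 1 := by
  obtain ⟨u, rfl⟩ := hu
  have hzero : ∀ f : G, f ≠ g⁻¹ → gproj 𝒜 f (↑u⁻¹ : A) = 0 := by
    intro f hf
    have hsum : ∑ f' : G, ((u : A) * gproj 𝒜 f' (↑u⁻¹ : A)) = 1 := by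
      rw [← Finset.mul_sum, sum_gproj, Units.mul_inv]
    have h2 := congrArg (gproj 𝒜 (g * f)) hsum
    rw [map_sum, Finset.sum_eq_single f] at h2
    · have e1 : gproj 𝒜 (g * f) ((u : A) * gproj 𝒜 f (↑u⁻¹ : A))
          = (u : A) * gproj 𝒜 f (↑u⁻¹ : A) :=
        gproj_of_mem_same 𝒜 (hmul ha (gproj_mem 𝒜 f _))
      have e2 : gproj 𝒜 (g * f) (1 : A) = 0 :=
        gproj_of_mem_ne 𝒜 hone (fun hc => hf (eq_inv_of_mul_eq_one_right hc.symm))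
      rw [e1, e2] at h2
      have h3 : (↑u⁻¹ : A) * ((u : A) * gproj 𝒜 f (↑u⁻¹ : A)) = 0 := by rw [h2, mul_zero]
      rwa [← mul_assoc, Units.inv_mul, one_mul] at h3
    · intro f' _ hne
      exact gproj_of_mem_ne 𝒜 (hmul ha (gproj_mem 𝒜 f' _))
        (fun hc => hne (mul_left_cancel hc))
    · simp
  refine ⟨(↑u⁻¹ : A), ?_, u.mul_inv, u.inv_mul⟩
  rw [← sum_gproj 𝒜 (↑u⁻¹ : A)]
  apply Submodule.sum_mem
  intro f _
  rcases eq_or_ne f g⁻¹ with rfl | hf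
  · exact gproj_mem 𝒜 _ _
  · rw [hzero f hf]; exact (𝒜 g⁻¹).zero_mem

lemma gproj_conj {z : A} (hz : ∀ x : A, x * z = z * x) {h : G} {x x' : A}
    (hx : x ∈ 𝒜 h) (hx' : x' ∈ 𝒜 h⁻¹) (hxx' : x * x' = 1) (g : G) :
    gproj 𝒜 (h * g * h⁻¹) z = x * gproj 𝒜 g z * x' := by
  have hzz : z = ∑ g' : G, x * gproj 𝒜 g' z * x' := by
    rw [← Finset.sum_mul, ← Finset.mul_sum, sum_gproj, hz x, mul_assoc, hxx', mul_one]
  have h2 := congrArg (gproj 𝒜 (h * g * h⁻¹)) hzz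
  rw [map_sum, Finset.sum_eq_single g] at h2
  · rwa [gproj_of_mem_same 𝒜 (hmul (hmul hx (gproj_mem 𝒜 g z)) hx')] at h2
  · intro g' _ hne
    exact gproj_of_mem_ne 𝒜 (hmul (hmul hx (gproj_mem 𝒜 g' z)) hx')
      (fun hc => hne (mul_left_cancel (mul_right_cancel hc)))
  · simp

end Aux

/-- If `A` is a finite dimensional `G`-graded division algebra and `char k ∤ |G|`,
then the center of `A` is a symmetric algebra: there is a linear functional on it
whose kernel contains no nonzero ideal. -/
theorem center_isSymmetric {k A G : Type*} [Field k] [Ring A] [Algebra k A] [Group G]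
    [Finite G] [DecidableEq G] [FiniteDimensional k A]
    (𝒜 : G → Submodule k A) (hA : IsGradedDivisionAlgebra 𝒜)
    (hchar : ¬ ringChar k ∣ Nat.card G) :
    ∃ lam : Subalgebra.center k A →ₗ[k] k,
      (∀ a b : Subalgebra.center k A, lam (a * b) = lam (b * a)) ∧
      ∀ I : Ideal (Subalgebra.center k A), (∀ x ∈ I, lam x = 0) → I = ⊥ := by
  classical
  rcases subsingleton_or_nontrivial A with hA0 | hA1
  · refine ⟨0, by simp, fun I _ => ?_⟩
    have : Subsingleton (Subalgebra.center k A) :=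
      ⟨fun a b => Subtype.ext (Subsingleton.elim _ _)⟩
    exact Subsingleton.elim I ⊥
  letI : Fintype G := Fintype.ofFinite G
  letI : DirectSum.Decomposition 𝒜 := hA.internal.chooseDecomposition
  -- a linear functional with F 1 = 1
  obtain ⟨F0, hF0⟩ : ∃ F : Module.Dual k A, F 1 ≠ 0 := by
    by_contra hno
    push_neg at hno
    exact one_ne_zero ((Module.forall_dual_apply_eq_zero_iff k (1 : A)).mp hno)
  set F : A →ₗ[k] k := (F0 1)⁻¹ • F0 with hFdef
  have hF1 : F 1 = 1 := by
    simp [hFdef, inv_mul_cancel₀ hF0]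
  set Z := Subalgebra.center k A with hZdef
  set lam : Z →ₗ[k] k := F ∘ₗ (gproj 𝒜 1) ∘ₗ (Subalgebra.val Z).toLinearMap with hlamdef
  have hlam_apply : ∀ t : Z, lam t = F (gproj 𝒜 1 (t : A)) := fun t => rfl
  refine ⟨lam, ?_, ?_⟩
  · intro a b
    have hab : a * b = b * a := by
      apply Subtype.ext
      exact (Subalgebra.mem_center_iff.mp a.2 (b : A)).symm
    rw [hab]
  · intro I hI
    by_contra hne
    obtain ⟨z, hzI, hz0⟩ := (Submodule.ne_bot_iff I).mp hne
    have hzv : (z : A) ≠ 0 := fun h => hz0 (Subtype.ext h)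
    set c : G → A := fun g => gproj 𝒜 g (z : A) with hcdef
    have hcmem : ∀ g, c g ∈ 𝒜 g := fun g => gproj_mem 𝒜 g _
    have hzc : ∀ x : A, x * (z : A) = (z : A) * x := Subalgebra.mem_center_iff.mp z.2
    obtain ⟨g₀, hg₀⟩ : ∃ g₀, c g₀ ≠ 0 := by
      by_contra hno
      push_neg at hno
      apply hzv
      rw [← sum_gproj 𝒜 (z : A)]
      exact Finset.sum_eq_zero fun g _ => hno g
    -- the support subgroup
    set H : Subgroup G :=
      { carrier := {g | ∃ a, a ∈ 𝒜 g ∧ a ≠ 0}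
        one_mem' := ⟨1, hA.one_mem, one_ne_zero⟩
        mul_mem' := by
          rintro g h ⟨a, ha, ha0⟩ ⟨b, hb, hb0⟩
          exact ⟨a * b, hA.mul_mem ha hb,
            ((hA.isUnit_of_ne_zero _ a ha ha0).mul (hA.isUnit_of_ne_zero _ b hb hb0)).ne_zero⟩
        inv_mem' := by
          rintro g ⟨a, ha, ha0⟩
          obtain ⟨b, hb, hab, hba⟩ := exists_ginv 𝒜 (fun {g h a b} => hA.mul_mem)
            hA.one_mem ha (hA.isUnit_of_ne_zero _ a ha ha0)
          exact ⟨b, hb, fun h0 => one_ne_zero (by rw [← hab, h0, mul_zero])⟩ } with hHdef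
    have hunit : ∀ {h : G}, h ∈ H →
        ∃ x x' : A, x ∈ 𝒜 h ∧ x' ∈ 𝒜 h⁻¹ ∧ x * x' = 1 ∧ x' * x = 1 := by
      rintro h ⟨a, ha, ha0⟩
      obtain ⟨b, hb, hab, hba⟩ := exists_ginv 𝒜 (fun {g h a b} => hA.mul_mem)
        hA.one_mem ha (hA.isUnit_of_ne_zero _ a ha ha0)
      exact ⟨a, b, ha, hb, hab, hba⟩
    set HC : Subgroup (ConjAct G) := H.map (ConjAct.toConjAct.toMonoidHom) with hHCdef
    set O : Set G := MulAction.orbit HC g₀ with hOdef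
    have hg₀O : g₀ ∈ O := MulAction.mem_orbit_self g₀
    have hsmul : ∀ (h : G) (hh : h ∈ H) (g : G),
        (⟨ConjAct.toConjAct h, ⟨h, hh, rfl⟩⟩ : HC) • g = h * g * h⁻¹ := by
      intro h hh g
      show ConjAct.toConjAct h • g = h * g * h⁻¹
      exact ConjAct.toConjAct_smul h g
    have hconjO : ∀ h ∈ H, ∀ g ∈ O, h * g * h⁻¹ ∈ O := by
      intro h hh g hg
      rw [hOdef, MulAction.mem_orbit_iff] at hg ⊢
      obtain ⟨m, hm⟩ := hg
      refine ⟨(⟨ConjAct.toConjAct h, ⟨h, hh, rfl⟩⟩ : HC) * m, ?_⟩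
      rw [mul_smul, hm, hsmul h hh g]
    -- every element of the orbit supports a nonzero (hence invertible) component of z
    have hO_ne : ∀ g ∈ O, c g ≠ 0 := by
      intro g hg
      rw [hOdef, MulAction.mem_orbit_iff] at hg
      obtain ⟨⟨m, hmH⟩, hmm⟩ := hg
      obtain ⟨h, hh, hmeq⟩ := hmH
      obtain ⟨x, x', hx, hx', hxx', hx'x⟩ := hunit hh
      have hg' : g = h * g₀ * h⁻¹ := by
        rw [← hmm]
        show m • g₀ = h * g₀ * h⁻¹
        rw [← hmeq]
        exact ConjAct.toConjAct_smul h g₀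
      rw [hg']
      have hcc : c (h * g₀ * h⁻¹) = x * c g₀ * x' :=
        gproj_conj 𝒜 (fun {g h a b} => hA.mul_mem) hzc hx hx' hxx' g₀
      rw [hcc]
      intro h0
      apply hg₀
      have h1 : x * c g₀ = 0 := by
        have h2 := congrArg (· * x) h0
        simp only [zero_mul] at h2
        rwa [mul_assoc, hx'x, mul_one] at h2
      have h3 := congrArg (x' * ·) h1
      simp only [mul_zero] at h3
      rwa [← mul_assoc, hx'x, one_mul] at h3
    -- inverses of the components over the orbit
    set P : G → Prop := fun g => ∃ b, b ∈ 𝒜 g⁻¹ ∧ c g * b = 1 ∧ b * c g = 1 with hPdef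
    have hPO : ∀ g ∈ O, P g := fun g hg =>
      exists_ginv 𝒜 (fun {g h a b} => hA.mul_mem) hA.one_mem (hcmem g)
        (hA.isUnit_of_ne_zero g _ (hcmem g) (hO_ne g hg))
    set d : G → A := fun g => if hg : P g then hg.choose else 0 with hddef
    have hd : ∀ g ∈ O, d g ∈ 𝒜 g⁻¹ ∧ c g * d g = 1 ∧ d g * c g = 1 := by
      intro g hg
      have hp := hPO g hg
      rw [hddef]
      simp only [dif_pos hp]
      exact hp.choose_spec
    set Ofin : Finset G := (Set.toFinite O).toFinset with hOfindef
    have hOfin_mem : ∀ {g : G}, g ∈ Ofin ↔ g ∈ O := fun {g} => Set.Finite.mem_toFinset _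
    set w : A := ∑ g ∈ Ofin, d g with hwdef
    -- w is central
    have hwc : ∀ {h : G} (x : A), x ∈ 𝒜 h → x * w = w * x := by
      intro h x hx
      rcases eq_or_ne x 0 with rfl | hx0
      · rw [zero_mul, mul_zero]
      have hhH : h ∈ H := ⟨x, hx, hx0⟩
      obtain ⟨b, hb, hxb, hbx⟩ := exists_ginv 𝒜 (fun {g h a b} => hA.mul_mem)
        hA.one_mem hx (hA.isUnit_of_ne_zero _ x hx hx0)
      have key : ∀ g ∈ Ofin, x * d g * b = d (h * g * h⁻¹) := by
        intro g hg
        have hgO : g ∈ O := hOfin_mem.mp hg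
        have hgO' : h * g * h⁻¹ ∈ O := hconjO h hhH g hgO
        obtain ⟨hd1, hd2, hd3⟩ := hd g hgO
        obtain ⟨hd1', hd2', hd3'⟩ := hd _ hgO'
        have hcc : c (h * g * h⁻¹) = x * c g * b :=
          gproj_conj 𝒜 (fun {g h a b} => hA.mul_mem) hzc hx hb hxb g
        have hinner : (x * c g * b) * (x * d g * b) = 1 := by
          calc (x * c g * b) * (x * d g * b)
              = x * (c g * (b * (x * (d g * b)))) := by simp only [mul_assoc]
            _ = x * (c g * (d g * b)) := by rw [← mul_assoc b x, hbx, one_mul]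
            _ = x * ((c g * d g) * b) := by rw [mul_assoc (c g)]
            _ = x * b := by rw [hd2, one_mul]
            _ = 1 := hxb
        calc x * d g * b = 1 * (x * d g * b) := (one_mul _).symm
          _ = (d (h * g * h⁻¹) * c (h * g * h⁻¹)) * (x * d g * b) := by rw [hd3']
          _ = d (h * g * h⁻¹) * ((x * c g * b) * (x * d g * b)) := by
              rw [hcc, mul_assoc]
          _ = d (h * g * h⁻¹) := by rw [hinner, mul_one]
      have hxwb : x * w * b = w := by
        rw [hwdef, Finset.mul_sum, Finset.sum_mul]
        rw [Finset.sum_congr rfl key]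
        refine Finset.sum_nbij' (fun g => h * g * h⁻¹) (fun g => h⁻¹ * g * h) ?_ ?_ ?_ ?_ ?_
        · intro g hg
          exact hOfin_mem.mpr (hconjO h hhH g (hOfin_mem.mp hg))
        · intro g hg
          have h2 := hconjO h⁻¹ (H.inv_mem hhH) g (hOfin_mem.mp hg)
          rw [inv_inv] at h2
          exact hOfin_mem.mpr h2
        · intro g _; group
        · intro g _; group
        · intro g _; rfl
      calc x * w = x * w * (b * x) := by rw [hbx, mul_one]
        _ = (x * w * b) * x := by rw [← mul_assoc]
        _ = w * x := by rw [hxwb]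
    have hwZ : w ∈ Subalgebra.center k A := by
      rw [Subalgebra.mem_center_iff]
      intro a
      have ha : a ∈ ⨆ g, 𝒜 g := by
        rw [(DirectSum.Decomposition.isInternal 𝒜).submodule_iSup_eq_top]
        trivial
      refine Submodule.iSup_induction 𝒜 (motive := fun a => a * w = w * a) ha ?_ ?_ ?_
      · intro g x hx; exact hwc x hx
      · show (0 : A) * w = w * 0
        rw [zero_mul, mul_zero]
      · intro a b h1 h2; rw [add_mul, mul_add, h1, h2]
    set wZ : Z := ⟨w, hwZ⟩ with hwZdef
    have htI : wZ • z ∈ I := I.smul_mem wZ hzI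
    have hlam0 := hI _ htI
    have hval : ((wZ • z : Z) : A) = w * (z : A) := rfl
    -- compute lam (wZ • z)
    have hproj : gproj 𝒜 1 (w * (z : A)) = (Ofin.card : ℕ) • (1 : A) := by
      have hexp : w * (z : A) = ∑ g ∈ Ofin, ∑ g' : G, d g * c g' := by
        conv_lhs => rw [hwdef, ← sum_gproj 𝒜 (z : A)]
        rw [Finset.sum_mul_sum]
      rw [hexp, map_sum]
      have hinner : ∀ g ∈ Ofin, gproj 𝒜 1 (∑ g' : G, d g * c g') = 1 := by
        intro g hg
        have hgO : g ∈ O := hOfin_mem.mp hg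
        obtain ⟨hd1, hd2, hd3⟩ := hd g hgO
        rw [map_sum, Finset.sum_eq_single g]
        · rw [hd3]
          exact gproj_of_mem_same 𝒜 hA.one_mem
        · intro g' _ hne
          apply gproj_of_mem_ne 𝒜 (hA.mul_mem hd1 (hcmem g'))
          intro hc
          apply hne
          have := eq_inv_of_mul_eq_one_right hc
          rwa [inv_inv] at this
        · simp
      rw [Finset.sum_congr rfl hinner, Finset.sum_const]
    have hlamval : lam (wZ • z) = (Ofin.card : k) := by
      rw [hlam_apply, hval, hproj, map_nsmul, hF1, nsmul_eq_mul, mul_one]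
    -- the cardinality of the orbit is invertible in k
    have hcard : (Ofin.card : ℕ) ∣ Nat.card G := by
      have e0 : Ofin.card = Nat.card O := by
        rw [Nat.card_coe_set_eq, Set.ncard_eq_toFinset_card O (Set.toFinite O)]
      have e1 : Nat.card O = Nat.card (HC ⧸ MulAction.stabilizer HC g₀) :=
        Nat.card_congr (MulAction.orbitEquivQuotientStabilizer HC g₀)
      have e2 : Nat.card HC = Nat.card (HC ⧸ MulAction.stabilizer HC g₀) *
          Nat.card (MulAction.stabilizer HC g₀) :=
        Subgroup.card_eq_card_quotient_mul_card_subgroup _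
      have e3 : Nat.card O ∣ Nat.card HC := by
        rw [e1, e2]; exact Dvd.intro _ rfl
      have e4 : Nat.card HC ∣ Nat.card (ConjAct G) := HC.card_subgroup_dvd_card
      have e5 : Nat.card (ConjAct G) = Nat.card G :=
        Nat.card_congr ConjAct.ofConjAct.toEquiv
      rw [e0]
      exact (e3.trans e4).trans (dvd_of_eq e5)
    have hcardk : ((Ofin.card : ℕ) : k) ≠ 0 := by
      intro h0
      exact hchar (dvd_trans ((ringChar.spec k _).mp h0) hcard)
    rw [hlam0] at hlamval
    exact hcardk hlamval.symm
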